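/- Let θ be a real number, and for η ∈ ℝ let r_η denote the 2×2 rotation matrix [[cos η, -sin η],[sin η, cos η]]. Let q = 2k-1 ≡ 1 (mod 4) be an odd prime power, χ the quadratic character on GF(q), and b ∈ GF(q) nonzero. Then the sum over a ∈ GF(q) \ {0,-b} of r_{θ(χ(a)-χ(a+b))} equals (k-2 + (k-1)·cos(2θ))·I₂. -/

import Mathlib

open Finset Matrix

/-- The 2×2 rotation matrix by angle `η`. -/
noncomputable def rot (η : ℝ) : Matrix (Fin 2) (Fin 2) ℝ :=
  !![Real.cos η, -Real.sin η; Real.sin η, Real.cos η]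

lemma rot_add_rot_neg (η : ℝ) :
    rot η + rot (-η) = (2 * Real.cos η) • (1 : Matrix (Fin 2) (Fin 2) ℝ) := by
  ext i j
  fin_cases i <;> fin_cases j <;>
    simp [rot, Matrix.one_apply, Real.cos_neg, Real.sin_neg] <;> ring

lemma char_sum_aux (F : Type*) [Field F] [Fintype F] [DecidableEq F]
    (hq2 : ringChar F ≠ 2) (b : F) (hb : b ≠ 0) :
    ∑ a ∈ univ.filter (fun a : F => a ≠ 0 ∧ a ≠ -b),
      (quadraticChar F a * quadraticChar F (a + b)) = -1 := by
  have h1 : ∑ a ∈ univ.filter (fun a : F => a ≠ 0 ∧ a ≠ -b),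
      (quadraticChar F a * quadraticChar F (a + b))
      = ∑ a ∈ univ.filter (fun a : F => a ≠ 0),
      (quadraticChar F a * quadraticChar F (a + b)) := by
    refine Finset.sum_subset (by intro a ha; simp_all) ?_
    intro a ha hna
    simp only [mem_filter, mem_univ, true_and] at ha hna
    have : a = -b := by tauto
    subst this
    simp
  rw [h1]
  have h2 : ∀ a ∈ univ.filter (fun a : F => a ≠ 0),
      (quadraticChar F a * quadraticChar F (a + b)) = quadraticChar F (1 + b * a⁻¹) := by
    intro a ha
    simp only [mem_filter, mem_univ, true_and] at ha
    have : a * (a + b) = a ^ 2 * (1 + b * a⁻¹) := by field_simp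
    rw [← _root_.map_mul, this, _root_.map_mul, quadraticChar_sq_one' ha, one_mul]
  rw [Finset.sum_congr rfl h2]
  have h3 : ∑ a ∈ univ.filter (fun a : F => a ≠ 0), quadraticChar F (1 + b * a⁻¹)
      = ∑ c ∈ univ.filter (fun c : F => c ≠ 1), quadraticChar F c := by
    refine Finset.sum_nbij' (fun a => 1 + b * a⁻¹) (fun c => b * (c - 1)⁻¹) ?_ ?_ ?_ ?_ ?_
    · intro a ha
      simp only [mem_filter, mem_univ, true_and] at ha ⊢
      intro h
      have : b * a⁻¹ = 0 := by linear_combination h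
      rcases mul_eq_zero.mp this with h' | h'
      · exact hb h'
      · exact ha (by simpa using h')
    · intro c hc
      simp only [mem_filter, mem_univ, true_and] at hc ⊢
      have : c - 1 ≠ 0 := sub_ne_zero.mpr hc
      exact mul_ne_zero hb (inv_ne_zero this)
    · intro a ha
      simp only [mem_filter, mem_univ, true_and] at ha
      have hba : b * a⁻¹ ≠ 0 := mul_ne_zero hb (inv_ne_zero ha)
      field_simp
      simp [hb]
    · intro c hc
      simp only [mem_filter, mem_univ, true_and] at hc
      have hc1 : c - 1 ≠ 0 := sub_ne_zero.mpr hc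
      field_simp
      ring
    · intro a ha; rfl
  rw [h3]
  have h4 : univ.filter (fun c : F => c ≠ 1) = univ.erase 1 := by
    ext c; simp [Finset.mem_erase]
  rw [h4]
  have h5 := Finset.sum_erase_add univ (fun c => quadraticChar F c) (Finset.mem_univ (1 : F))
  have h6 : ∑ c : F, quadraticChar F c = 0 := quadraticChar_sum_zero hq2
  have h7 : quadraticChar F (1 : F) = 1 := map_one _
  simp only [h7] at h5
  rw [h6] at h5
  omega

/-- For `q = 2k-1 ≡ 1 (mod 4)` an odd prime power, `b ≠ 0` in `GF(q)`
and any real `θ`, `∑_{a ≠ 0, -b} r_{θ(χ(a)-χ(a+b))} = (k-2 + (k-1)·cos 2θ)·I₂`. -/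
theorem rotation_sum (F : Type*) [Field F] [Fintype F] [DecidableEq F]
    (p : ℕ) (α : ℕ) (hp : p.Prime) (hodd : p ≠ 2)
    (hcard : Fintype.card F = p ^ α) (hmod : Fintype.card F % 4 = 1)
    (k : ℕ) (hk : Fintype.card F = 2 * k - 1) (hk2 : 2 ≤ k)
    (θ : ℝ) (b : F) (hb : b ≠ 0) :
    ∑ a ∈ univ.filter (fun a : F => a ≠ 0 ∧ a ≠ -b),
        rot (θ * ((quadraticChar F a - quadraticChar F (a + b) : ℤ) : ℝ)) =
      ((k : ℝ) - 2 + ((k : ℝ) - 1) * Real.cos (2 * θ)) • 1 := by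
  have hq2 : ringChar F ≠ 2 := by
    intro h
    have := FiniteField.even_card_iff_char_two.mp h
    omega
  have hχ1 : quadraticChar F (-1) = 1 := by
    rw [quadraticChar_neg_one hq2, ZMod.χ₄_nat_one_mod_four hmod]
  set s : Finset F := univ.filter (fun a : F => a ≠ 0 ∧ a ≠ -b) with hs
  set d : F → ℝ := fun a => ((quadraticChar F a - quadraticChar F (a + b) : ℤ) : ℝ) with hd
  set S : Matrix (Fin 2) (Fin 2) ℝ := ∑ a ∈ s, rot (θ * d a) with hS
  -- involution
  have hmem : ∀ a ∈ s, -b - a ∈ s := by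
    intro a ha
    simp only [hs, mem_filter, mem_univ, true_and] at ha ⊢
    constructor
    · intro h; exact ha.2 (by linear_combination -h)
    · intro h; exact ha.1 (by linear_combination -h)
  have hdneg : ∀ a : F, d (-b - a) = -(d a) := by
    intro a
    have e1 : quadraticChar F (-b - a) = quadraticChar F (a + b) := by
      have : (-b - a : F) = -1 * (a + b) := by ring
      rw [this, _root_.map_mul, hχ1, one_mul]
    have e2 : quadraticChar F (-b - a + b) = quadraticChar F a := by
      have : (-b - a + b : F) = -1 * a := by ring
      rw [this, _root_.map_mul, hχ1, one_mul]
    simp only [hd, e1, e2]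
    push_cast
    ring
  have hS2 : S + S = ∑ a ∈ s, (rot (θ * d a) + rot (-(θ * d a))) := by
    rw [Finset.sum_add_distrib]
    congr 1
    refine Finset.sum_nbij' (fun a => -b - a) (fun a => -b - a) hmem hmem ?_ ?_ ?_
    · intro a _; ring
    · intro a _; ring
    · intro a _
      rw [hdneg a]
      ring_nf
  have hScos : S + S = (∑ a ∈ s, 2 * Real.cos (θ * d a)) • (1 : Matrix (Fin 2) (Fin 2) ℝ) := by
    rw [hS2, Finset.sum_smul]
    exact Finset.sum_congr rfl fun a _ => rot_add_rot_neg (θ * d a)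
  -- identify scalar sum
  have hT : ∑ a ∈ s, (quadraticChar F a * quadraticChar F (a + b)) = -1 :=
    char_sum_aux F hq2 b hb
  have hcos : ∀ a ∈ s, Real.cos (θ * d a) =
      (1 + ((quadraticChar F a * quadraticChar F (a + b) : ℤ) : ℝ)) / 2 +
      (1 - ((quadraticChar F a * quadraticChar F (a + b) : ℤ) : ℝ)) / 2 * Real.cos (2 * θ) := by
    intro a ha
    simp only [hs, mem_filter, mem_univ, true_and] at ha
    have hab : a + b ≠ 0 := fun h => ha.2 (eq_neg_of_add_eq_zero_left h)
    rcases quadraticChar_dichotomy ha.1 with h1 | h1 <;>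
      rcases quadraticChar_dichotomy hab with h2 | h2 <;>
      simp only [hd, h1, h2] <;> push_cast <;> norm_num
    all_goals rw [mul_comm]
  have hcards : (s.card : ℝ) = 2 * (k : ℝ) - 3 := by
    have : s = univ \ {0, -b} := by
      ext a
      simp only [hs, mem_filter, mem_univ, true_and, Finset.mem_sdiff, Finset.mem_insert,
        Finset.mem_singleton]
      tauto
    rw [this, Finset.card_sdiff_of_subset (by simp)]
    have hpair : ({0, -b} : Finset F).card = 2 := by
      rw [Finset.card_insert_of_notMem (by
        simp only [Finset.mem_singleton]
        intro h
        exact hb (by linear_combination h))]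
      simp
    rw [hpair, Finset.card_univ, hk]
    have : 2 ≤ 2 * k - 1 := by omega
    push_cast [Nat.cast_sub (by omega : 2 ≤ 2 * k - 1), Nat.cast_sub (by omega : 1 ≤ 2 * k)]
    ring
  have hC : ∑ a ∈ s, Real.cos (θ * d a) =
      ((k : ℝ) - 2 + ((k : ℝ) - 1) * Real.cos (2 * θ)) := by
    rw [Finset.sum_congr rfl hcos]
    have expand : ∀ x : ℝ, (1 + x) / 2 + (1 - x) / 2 * Real.cos (2 * θ) =
        ((1 + Real.cos (2 * θ)) / 2) + x * ((1 - Real.cos (2 * θ)) / 2) := by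
      intro x; ring
    calc ∑ a ∈ s, ((1 + ((quadraticChar F a * quadraticChar F (a + b) : ℤ) : ℝ)) / 2 +
          (1 - ((quadraticChar F a * quadraticChar F (a + b) : ℤ) : ℝ)) / 2 * Real.cos (2 * θ))
        = ∑ a ∈ s, (((1 + Real.cos (2 * θ)) / 2) +
            ((quadraticChar F a * quadraticChar F (a + b) : ℤ) : ℝ) *
            ((1 - Real.cos (2 * θ)) / 2)) := Finset.sum_congr rfl fun a _ => expand _
      _ = s.card * ((1 + Real.cos (2 * θ)) / 2) +
            (∑ a ∈ s, ((quadraticChar F a * quadraticChar F (a + b) : ℤ) : ℝ)) *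
            ((1 - Real.cos (2 * θ)) / 2) := by
          rw [Finset.sum_add_distrib, Finset.sum_const, ← Finset.sum_mul]
          simp [nsmul_eq_mul]
      _ = ((k : ℝ) - 2 + ((k : ℝ) - 1) * Real.cos (2 * θ)) := by
          have : (∑ a ∈ s, ((quadraticChar F a * quadraticChar F (a + b) : ℤ) : ℝ)) = -1 := by
            rw [← Int.cast_sum, hT]; norm_num
          rw [this, hcards]; ring
  -- conclude
  have h2S : (2 : ℝ) • S = (2 : ℝ) • (((k : ℝ) - 2 + ((k : ℝ) - 1) * Real.cos (2 * θ)) •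
      (1 : Matrix (Fin 2) (Fin 2) ℝ)) := by
    rw [two_smul, hScos, smul_smul]
    rw [show ∑ a ∈ s, 2 * Real.cos (θ * d a) = 2 * ∑ a ∈ s, Real.cos (θ * d a) by
      rw [Finset.mul_sum], hC]
  have := smul_right_injective (Matrix (Fin 2) (Fin 2) ℝ) (two_ne_zero (α := ℝ)) h2S
  exact this
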